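/- Assume b₁, …, b₅ are pairwise distinct complex numbers. Let ι : ℂ[x, y₇] → ℂ[x, y₇, y₈] be the canonical inclusion of polynomial rings. Then the preimage (Ideal.comap ι) of the ideal generated by f₁₄, f₁₅, f₁₆ is the principal ideal of ℂ[x, y₇] generated by y₇³ − k₃(x)k₂(x)². -/

import Mathlib

open MvPolynomial

/-- `k₃(x) = (x−b₁)(x−b₂)(x−b₃)` in `ℂ[x,y₇,y₈]` (variables `X 0 = x`, `X 1 = y₇`, `X 2 = y₈`). -/
noncomputable def k3X4 (b : Fin 5 → ℂ) : MvPolynomial (Fin 3) ℂ :=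
  (X 0 - C (b 0)) * (X 0 - C (b 1)) * (X 0 - C (b 2))

/-- `k₂(x) = (x−b₄)(x−b₅)` in `ℂ[x,y₇,y₈]`. -/
noncomputable def k2X4 (b : Fin 5 → ℂ) : MvPolynomial (Fin 3) ℂ :=
  (X 0 - C (b 3)) * (X 0 - C (b 4))

/-- `k₃(x)` in `ℂ[x,y₇]` (variables `X 0 = x`, `X 1 = y₇`). -/
noncomputable def k3X6 (b : Fin 5 → ℂ) : MvPolynomial (Fin 2) ℂ :=
  (X 0 - C (b 0)) * (X 0 - C (b 1)) * (X 0 - C (b 2))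

/-- `k₂(x)` in `ℂ[x,y₇]`. -/
noncomputable def k2X6 (b : Fin 5 → ℂ) : MvPolynomial (Fin 2) ℂ :=
  (X 0 - C (b 3)) * (X 0 - C (b 4))

section Aux

lemma vand (α β δ t ω : ℂ) (ht : t ≠ 0) (hω : ω^2 + ω + 1 = 0)
    (e0 : α + β*t + δ*t^2 = 0) (e1 : α + β*(ω*t) + δ*(ω*t)^2 = 0)
    (e2 : α + β*(ω^2*t) + δ*(ω^2*t)^2 = 0) :
    α = 0 ∧ β = 0 ∧ δ = 0 := by
  have hω3 : ω^3 = 1 := by linear_combination (ω - 1) * hω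
  have ha : α = 0 := by
    linear_combination (e0+e1+e2)/3 - (β*t)/3*hω - (δ*t^2*(ω^2-ω+1))/3*hω
  have hbt : β*t = 0 := by
    linear_combination (e0 + ω^2*e1 + ω*e2)/3 - α/3*hω - (2*β*t/3)*hω3
      - (δ*t^2*(ω+ω^2)/3)*hω3 - (δ*t^2/3)*hω
  have hdt : δ*t^2 = 0 := by
    linear_combination (e0 + ω*e1 + ω^2*e2)/3 - α/3*hω - (β*t*(ω^2-ω+1))/3*hω
      - (δ*t^2*(ω^3+2)/3)*hω3
  refine ⟨ha, ?_, ?_⟩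
  · rcases mul_eq_zero.mp hbt with h|h
    · exact h
    · exact absurd h ht
  · rcases mul_eq_zero.mp hdt with h|h
    · exact h
    · exact absurd (pow_eq_zero_iff (by norm_num) |>.mp h) ht

noncomputable def E1 : MvPolynomial (Fin 1) ℂ ≃ₐ[ℂ] Polynomial ℂ :=
  (MvPolynomial.finSuccEquiv ℂ 0).trans (Polynomial.mapAlgEquiv (MvPolynomial.isEmptyAlgEquiv ℂ (Fin 0)))

noncomputable def E2 : MvPolynomial (Fin 2) ℂ ≃ₐ[ℂ] Polynomial (Polynomial ℂ) :=
  (MvPolynomial.renameEquiv ℂ (Equiv.swap 0 1)).trans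
    ((MvPolynomial.finSuccEquiv ℂ 1).trans (Polynomial.mapAlgEquiv E1))

lemma E1_X0 : E1 (X 0) = Polynomial.X := by
  simp [E1, Polynomial.coe_mapAlgEquiv, MvPolynomial.finSuccEquiv_X_zero]

lemma E2_X1 : E2 (X 1) = Polynomial.X := by
  have h : Equiv.swap (0:Fin 2) 1 1 = 0 := by decide
  simp [E2, MvPolynomial.renameEquiv_apply, MvPolynomial.rename_X, h,
    MvPolynomial.finSuccEquiv_X_zero, Polynomial.coe_mapAlgEquiv]

lemma E2_X0 : E2 (X 0) = Polynomial.C Polynomial.X := by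
  have h : Equiv.swap (0:Fin 2) 1 0 = Fin.succ 0 := by decide
  rw [E2, AlgEquiv.trans_apply, MvPolynomial.renameEquiv_apply, MvPolynomial.rename_X, h,
    AlgEquiv.trans_apply, MvPolynomial.finSuccEquiv_X_succ]
  rw [show ⇑(Polynomial.mapAlgEquiv (R := ℂ) E1) = Polynomial.map (E1 : MvPolynomial (Fin 1) ℂ →+* Polynomial ℂ) from rfl,
    Polynomial.map_C]
  rw [show ((E1 : MvPolynomial (Fin 1) ℂ →+* Polynomial ℂ) (X 0)) = E1 (X 0) from rfl, E1_X0]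

lemma E2_C (a : ℂ) : E2 (C a) = Polynomial.C (Polynomial.C a) := by
  have : (C a : MvPolynomial (Fin 2) ℂ) = algebraMap ℂ _ a := rfl
  rw [this, AlgEquiv.commutes]
  rfl

lemma aeval_pair (x₀ t : ℂ) (p : MvPolynomial (Fin 2) ℂ) :
    aeval ![x₀, t] p = Polynomial.eval t ((E2 p).map (Polynomial.evalRingHom x₀)) := by
  have key : (aeval ![x₀, t] : MvPolynomial (Fin 2) ℂ →ₐ[ℂ] ℂ) =
      ((Polynomial.aeval t).comp ((Polynomial.mapAlgHom (Polynomial.aeval x₀)).comp E2.toAlgHom)) := by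
    apply MvPolynomial.algHom_ext
    intro i
    fin_cases i <;>
      simp [E2_X0, E2_X1, Polynomial.mapAlgHom, Polynomial.aeval_def, Polynomial.eval₂_map]
  calc aeval ![x₀, t] p
      = ((Polynomial.aeval t).comp ((Polynomial.mapAlgHom (Polynomial.aeval x₀)).comp E2.toAlgHom)) p := by
        rw [key]
    _ = Polynomial.eval t ((E2 p).map (Polynomial.evalRingHom x₀)) := by
        simp [Polynomial.mapAlgHom, Polynomial.aeval_def, Polynomial.eval₂_eq_eval_map]

/-- big coefficient polynomial `c(x) = k₃ k₂²` in one variable -/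
noncomputable def cpoly (b : Fin 5 → ℂ) : Polynomial ℂ :=
  (Polynomial.X - Polynomial.C (b 0)) * (Polynomial.X - Polynomial.C (b 1)) *
    (Polynomial.X - Polynomial.C (b 2)) *
    ((Polynomial.X - Polynomial.C (b 3)) * (Polynomial.X - Polynomial.C (b 4)))^2

lemma E2_g (b : Fin 5 → ℂ) :
    E2 ((X 1 : MvPolynomial (Fin 2) ℂ) ^ 3 - k3X6 b * (k2X6 b) ^ 2)
      = Polynomial.X ^ 3 - Polynomial.C (cpoly b) := by
  simp only [k3X6, k2X6, cpoly, map_sub, map_mul, map_pow, E2_X0, E2_X1, E2_C, Polynomial.C_sub,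
    Polynomial.C_mul, Polynomial.C_pow]

lemma cpoly_eval (b : Fin 5 → ℂ) (x₀ : ℂ) :
    Polynomial.eval x₀ (cpoly b) =
      (x₀ - b 0) * (x₀ - b 1) * (x₀ - b 2) * ((x₀ - b 3) * (x₀ - b 4))^2 := by
  simp [cpoly]

lemma cpoly_ne_zero (b : Fin 5 → ℂ) : cpoly b ≠ 0 := by
  have : (cpoly b).Monic := by
    unfold cpoly
    apply Polynomial.Monic.mul
    apply Polynomial.Monic.mul
    apply Polynomial.Monic.mul
    all_goals first
      | exact Polynomial.monic_X_sub_C _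
      | exact ((Polynomial.monic_X_sub_C _).mul (Polynomial.monic_X_sub_C _)).pow 2
      | exact ((Polynomial.monic_X_sub_C _).mul (Polynomial.monic_X_sub_C _)).pow 2
  exact this.ne_zero

/-- Key evaluation lemma: if `ι p` lies in the ideal, then `p` vanishes at points of the curve. -/
lemma eval_zero_of_mem (b : Fin 5 → ℂ) (p : MvPolynomial (Fin 2) ℂ)
    (hp : (MvPolynomial.aeval (![X 0, X 1] : Fin 2 → MvPolynomial (Fin 3) ℂ)) p ∈
      Ideal.span {(X 1 : MvPolynomial (Fin 3) ℂ) ^ 2 - X 2 * k2X4 b,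
        X 1 * X 2 - k2X4 b * k3X4 b, (X 2) ^ 2 - X 1 * k3X4 b})
    (x₀ s : ℂ) (hκ : (x₀ - b 3) * (x₀ - b 4) ≠ 0)
    (hs : s ^ 3 = (x₀ - b 0) * (x₀ - b 1) * (x₀ - b 2) * ((x₀ - b 3) * (x₀ - b 4))^2) :
    aeval ![x₀, s] p = 0 := by
  have hIv : ∀ q ∈ Ideal.span {(X 1 : MvPolynomial (Fin 3) ℂ) ^ 2 - X 2 * k2X4 b,
      X 1 * X 2 - k2X4 b * k3X4 b, (X 2) ^ 2 - X 1 * k3X4 b},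
      aeval (![x₀, s, s^2 / ((x₀ - b 3) * (x₀ - b 4))] : Fin 3 → ℂ) q = 0 := by
    intro q hq
    have hle : Ideal.span {(X 1 : MvPolynomial (Fin 3) ℂ) ^ 2 - X 2 * k2X4 b,
        X 1 * X 2 - k2X4 b * k3X4 b, (X 2) ^ 2 - X 1 * k3X4 b} ≤
        RingHom.ker (aeval (![x₀, s, s^2 / ((x₀ - b 3) * (x₀ - b 4))] : Fin 3 → ℂ) :
          MvPolynomial (Fin 3) ℂ →ₐ[ℂ] ℂ).toRingHom := by
      rw [Ideal.span_le]
      rintro q' hq'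
      simp only [Set.mem_insert_iff, Set.mem_singleton_iff] at hq'
      rcases hq' with rfl | rfl | rfl
      · show aeval _ _ = 0
        simp [k2X4, k3X4]
        field_simp
        rw [div_self hκ, sub_self, mul_zero]
      · show aeval _ _ = 0
        simp [k2X4, k3X4]
        rw [sub_eq_zero, mul_div_assoc', div_eq_iff hκ]
        linear_combination hs
      · show aeval _ _ = 0
        simp [k2X4, k3X4]
        rw [sub_eq_zero, div_pow, div_eq_iff (pow_ne_zero 2 hκ)]
        linear_combination s * hs
    exact hle hq
  have h1 : aeval (![x₀, s, s^2 / ((x₀ - b 3) * (x₀ - b 4))] : Fin 3 → ℂ)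
      ((MvPolynomial.aeval (![X 0, X 1] : Fin 2 → MvPolynomial (Fin 3) ℂ)) p) = 0 :=
    hIv _ hp
  have hcomp : ((aeval (![x₀, s, s^2 / ((x₀ - b 3) * (x₀ - b 4))] : Fin 3 → ℂ) :
      MvPolynomial (Fin 3) ℂ →ₐ[ℂ] ℂ).comp
      (MvPolynomial.aeval (![X 0, X 1] : Fin 2 → MvPolynomial (Fin 3) ℂ))) =
      (aeval ![x₀, s] : MvPolynomial (Fin 2) ℂ →ₐ[ℂ] ℂ) := by
    apply MvPolynomial.algHom_ext
    intro i
    fin_cases i <;> simp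
  calc aeval ![x₀, s] p = ((aeval (![x₀, s, s^2 / ((x₀ - b 3) * (x₀ - b 4))] : Fin 3 → ℂ) :
      MvPolynomial (Fin 3) ℂ →ₐ[ℂ] ℂ).comp
      (MvPolynomial.aeval (![X 0, X 1] : Fin 2 → MvPolynomial (Fin 3) ℂ))) p := by rw [hcomp]
    _ = 0 := h1

end Aux

/-- For pairwise distinct `b₁, …, b₅`, the preimage under the inclusion
`ι : ℂ[x, y₇] → ℂ[x, y₇, y₈]` (`x ↦ x`, `y₇ ↦ y₇`) of the ideal `(f₁₄, f₁₅, f₁₆)` is the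
principal ideal generated by `y₇³ − k₃(x)k₂(x)²`. -/
theorem comap_ideal_X4_to_X6 (b : Fin 5 → ℂ) (hb : Function.Injective b) :
    Ideal.comap
        ((MvPolynomial.aeval (![X 0, X 1] : Fin 2 → MvPolynomial (Fin 3) ℂ) :
          MvPolynomial (Fin 2) ℂ →ₐ[ℂ] MvPolynomial (Fin 3) ℂ).toRingHom)
        (Ideal.span {(X 1 : MvPolynomial (Fin 3) ℂ) ^ 2 - X 2 * k2X4 b,
          X 1 * X 2 - k2X4 b * k3X4 b,
          (X 2) ^ 2 - X 1 * k3X4 b}) =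
      Ideal.span {(X 1 : MvPolynomial (Fin 2) ℂ) ^ 3 - k3X6 b * (k2X6 b) ^ 2} := by
  apply le_antisymm
  · -- hard direction
    intro p hp
    rw [Ideal.mem_comap] at hp
    set g : MvPolynomial (Fin 2) ℂ := (X 1 : MvPolynomial (Fin 2) ℂ) ^ 3 - k3X6 b * (k2X6 b) ^ 2 with hgdef
    set G : Polynomial (Polynomial ℂ) := Polynomial.X ^ 3 - Polynomial.C (cpoly b) with hGdef
    have hEg : E2 g = G := E2_g b
    have hGm : G.Monic := Polynomial.monic_X_pow_sub_C _ (by norm_num)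
    set P : Polynomial (Polynomial ℂ) := E2 p with hPdef
    set R : Polynomial (Polynomial ℂ) := P %ₘ G with hRdef
    set Q : Polynomial (Polynomial ℂ) := P /ₘ G with hQdef
    have hPR : R + G * Q = P := Polynomial.modByMonic_add_div P G
    have hdegG : G.degree = 3 := by
      rw [hGdef]
      exact Polynomial.degree_X_pow_sub_C (by norm_num) _
    have hdeg : R.degree < 3 := by
      have := Polynomial.degree_modByMonic_lt P hGm
      rwa [hdegG] at this
    -- key: the three low coefficients of R vanish
    have hcoeff : ∀ i, i < 3 → R.coeff i = 0 := by
      intro i hi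
      apply Polynomial.eq_zero_of_infinite_isRoot
      apply Set.Infinite.mono (s := {x : ℂ | Polynomial.IsRoot (cpoly b) x}ᶜ)
      swap
      · exact (Polynomial.finite_setOf_isRoot (cpoly_ne_zero b)).infinite_compl
      intro x₀ hx₀
      simp only [Set.mem_compl_iff, Set.mem_setOf_eq, Polynomial.IsRoot] at hx₀
      -- γ ≠ 0
      have hγ : Polynomial.eval x₀ (cpoly b) ≠ 0 := hx₀
      have hκ : (x₀ - b 3) * (x₀ - b 4) ≠ 0 := by
        intro h
        apply hγ
        rw [cpoly_eval, h]
        ring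
      obtain ⟨t, ht3⟩ := IsAlgClosed.exists_pow_nat_eq (k := ℂ) (Polynomial.eval x₀ (cpoly b)) (n := 3) (by norm_num)
      have ht0 : t ≠ 0 := by
        intro h
        apply hγ
        rw [← ht3, h]
        ring
      -- primitive cube root of unity
      have hprim := Complex.isPrimitiveRoot_exp 3 (by norm_num)
      set ω : ℂ := Complex.exp (2 * Real.pi * Complex.I / 3) with hωdef
      have hω3 : ω ^ 3 = 1 := hprim.pow_eq_one
      have hωne : ω ≠ 1 := hprim.ne_one (by norm_num)
      have hω : ω^2 + ω + 1 = 0 := by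
        have h1 : (ω - 1) * (ω^2 + ω + 1) = 0 := by linear_combination hω3
        rcases mul_eq_zero.mp h1 with h | h
        · exact absurd (by linear_combination h) hωne
        · exact h
      -- evaluation equations
      have keyeval : ∀ s : ℂ, s ^ 3 = Polynomial.eval x₀ (cpoly b) →
          Polynomial.eval x₀ (R.coeff 0) + Polynomial.eval x₀ (R.coeff 1) * s +
            Polynomial.eval x₀ (R.coeff 2) * s^2 = 0 := by
        intro s hs
        have hs' : s ^ 3 = (x₀ - b 0) * (x₀ - b 1) * (x₀ - b 2) * ((x₀ - b 3) * (x₀ - b 4))^2 := by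
          rw [hs, cpoly_eval]
        have hz := eval_zero_of_mem b p hp x₀ s hκ hs'
        rw [aeval_pair] at hz
        -- E2 p = R + G * Q
        have hmap : (E2 p).map (Polynomial.evalRingHom x₀) =
            (R.map (Polynomial.evalRingHom x₀)) +
              (G.map (Polynomial.evalRingHom x₀)) * (Q.map (Polynomial.evalRingHom x₀)) := by
          rw [← hPdef, ← hPR]
          simp [Polynomial.map_add, Polynomial.map_mul]
        have hGmap : Polynomial.eval s (G.map (Polynomial.evalRingHom x₀)) = 0 := by
          rw [hGdef]
          simp [Polynomial.map_sub, Polynomial.map_pow, hs]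
        rw [hmap] at hz
        simp only [Polynomial.eval_add, Polynomial.eval_mul, hGmap, zero_mul, add_zero] at hz
        -- now expand eval of (R.map ...) as sum of 3 terms
        have hnd : (R.map (Polynomial.evalRingHom x₀)).natDegree < 3 := by
          rcases eq_or_ne R 0 with h | h
          · simp [h]
          · have h1 : R.natDegree < 3 :=
              (Polynomial.natDegree_lt_iff_degree_lt h).mpr (by simpa using hdeg)
            exact lt_of_le_of_lt Polynomial.natDegree_map_le h1
        rw [Polynomial.eval_eq_sum_range' hnd] at hz
        simp only [Finset.sum_range_succ, Finset.sum_range_zero, Polynomial.coeff_map,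
          Polynomial.coe_evalRingHom, zero_add, pow_zero, mul_one, pow_one] at hz
        linear_combination hz
      have e0 := keyeval t ht3
      have e1 := keyeval (ω * t) (by rw [mul_pow, hω3, one_mul, ht3])
      have e2 := keyeval (ω^2 * t) (by rw [mul_pow, ← pow_mul, show 2*3 = 3*2 from rfl, pow_mul, hω3, one_pow, one_mul, ht3])
      have hv := vand (Polynomial.eval x₀ (R.coeff 0)) (Polynomial.eval x₀ (R.coeff 1))
        (Polynomial.eval x₀ (R.coeff 2)) t ω ht0 hω e0 e1 e2
      interval_cases i
      · exact hv.1
      · exact hv.2.1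
      · exact hv.2.2
    have hR0 : R = 0 := by
      ext n
      rcases lt_or_ge n 3 with h | h
      · simp [hcoeff n h]
      · rw [Polynomial.coeff_eq_zero_of_degree_lt (lt_of_lt_of_le hdeg (by exact_mod_cast h))]
        simp
    rw [Ideal.mem_span_singleton]
    refine ⟨E2.symm Q, ?_⟩
    apply E2.injective
    rw [map_mul, hEg, AlgEquiv.apply_symm_apply]
    show P = G * Q
    rw [← hPR, hR0, zero_add]
  · -- easy direction
    rw [Ideal.span_le]
    intro q hq
    simp only [Set.mem_singleton_iff] at hq
    subst hq
    rw [SetLike.mem_coe, Ideal.mem_comap]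
    have himg : (MvPolynomial.aeval (![X 0, X 1] : Fin 2 → MvPolynomial (Fin 3) ℂ))
        ((X 1 : MvPolynomial (Fin 2) ℂ) ^ 3 - k3X6 b * (k2X6 b) ^ 2) =
        (X 1 : MvPolynomial (Fin 3) ℂ) ^ 3 - k3X4 b * (k2X4 b) ^ 2 := by
      simp [k3X6, k2X6, k3X4, k2X4]
    rw [AlgHom.toRingHom_eq_coe, RingHom.coe_coe, himg]
    have hdecomp : (X 1 : MvPolynomial (Fin 3) ℂ) ^ 3 - k3X4 b * (k2X4 b) ^ 2 =
        X 1 * ((X 1 : MvPolynomial (Fin 3) ℂ) ^ 2 - X 2 * k2X4 b) +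
        k2X4 b * (X 1 * X 2 - k2X4 b * k3X4 b) := by
      ring
    rw [hdecomp]
    apply Ideal.add_mem
    · exact Ideal.mul_mem_left _ _ (Ideal.subset_span (by simp))
    · exact Ideal.mul_mem_left _ _ (Ideal.subset_span (by simp))
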